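/- Let a clustering instance with k optimal clusters satisfy (1+c)-separation with witness radius r = 1 (all intra-cluster distances < 1, all inter-cluster distances > 1+c). Suppose the current centers C each lie in distinct optimal clusters, t − 1 = |C| < k. Then under d^α-sampling, the probability that the next chosen center lies in a cluster already containing a center is at most tn/(tn + (1+c)^α). -/

import Mathlib

/-- Under `(1+c)`-separation (intra-cluster distances `< 1`, inter-cluster distances
`> 1+c`), if the current centers `S` lie in distinct optimal clusters with
`|S| = t − 1 < k`, then the `d^α`-sampling probability that the next center lies in
an already-represented cluster is at most `t·n / (t·n + (1+c)^α)`. -/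
theorem stmt13 (n k : ℕ) (dist : Fin n → Fin n → ℝ)
    (lab : Fin n → Fin k) (c : ℝ) (hc : 0 < c)
    (hd0 : ∀ u v, 0 ≤ dist u v)
    (hintra : ∀ u v, lab u = lab v → dist u v < 1)
    (hinter : ∀ u v, lab u ≠ lab v → 1 + c < dist u v)
    (hsurj : Function.Surjective lab)
    (S : Finset (Fin n)) (hS : S.Nonempty)
    (hSdist : ∀ a ∈ S, ∀ b ∈ S, a ≠ b → lab a ≠ lab b)
    (t : ℕ) (ht1 : 1 ≤ t) (htcard : S.card = t - 1) (htk : t - 1 < k)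
    (α : ℝ) (hα : 0 ≤ α) :
    (∑ u ∈ Finset.univ.filter (fun u => ∃ s ∈ S, lab u = lab s),
        (S.inf' hS (dist u)) ^ α) /
      (∑ u, (S.inf' hS (dist u)) ^ α)
      ≤ (t * n : ℝ) / (t * n + (1 + c) ^ α) := by
  have hn : 0 < n := Nat.pos_of_ne_zero fun h => by subst h; exact hS.choose.elim0
  set q : ℝ := (1 + c) ^ α with hq
  have hqpos : 0 < q := Real.rpow_pos_of_pos (by linarith) α
  set f : Fin n → ℝ := fun u => (S.inf' hS (dist u)) ^ α with hf
  have hinf0 : ∀ u, 0 ≤ S.inf' hS (dist u) := fun u =>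
    Finset.le_inf' hS _ (fun s _ => hd0 u s)
  have hf0 : ∀ u, 0 ≤ f u := fun u => Real.rpow_nonneg (hinf0 u) α
  set A : Finset (Fin n) := Finset.univ.filter (fun u => ∃ s ∈ S, lab u = lab s) with hA
  set N : ℝ := ∑ u ∈ A, f u with hN
  set D : ℝ := ∑ u, f u with hD
  -- on A, f ≤ 1
  have hfA : ∀ u ∈ A, f u ≤ 1 := by
    intro u hu
    obtain ⟨s, hsS, hls⟩ := (Finset.mem_filter.mp hu).2
    have hle : S.inf' hS (dist u) ≤ dist u s := Finset.inf'_le _ hsS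
    have : S.inf' hS (dist u) < 1 := hle.trans_lt (hintra u s hls)
    exact Real.rpow_le_one (hinf0 u) this.le hα
  have hNle : N ≤ (t * n : ℝ) := by
    have h1 : N ≤ (A.card : ℝ) := by
      calc N ≤ ∑ _u ∈ A, (1 : ℝ) := Finset.sum_le_sum hfA
        _ = (A.card : ℝ) := by simp
    have h2 : (A.card : ℝ) ≤ (n : ℝ) := by
      exact_mod_cast (A.card_le_univ.trans (by simp [Finset.card_univ]))
    have h3 : (n : ℝ) ≤ (t * n : ℝ) := by
      have : (1 : ℝ) ≤ (t : ℝ) := by exact_mod_cast ht1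
      nlinarith [show (0:ℝ) ≤ (n:ℝ) from Nat.cast_nonneg n]
    linarith
  have hN0 : 0 ≤ N := Finset.sum_nonneg (fun u _ => hf0 u)
  -- find an unrepresented point
  have himg : (S.image lab).card < k := by
    have := Finset.card_image_le (s := S) (f := lab)
    omega
  have hne_univ : S.image lab ≠ Finset.univ := by
    intro h
    rw [h, Finset.card_univ, Fintype.card_fin] at himg
    omega
  have hex : ¬ ∀ ℓ, ℓ ∈ S.image lab := by
    intro h
    exact hne_univ (Finset.eq_univ_iff_forall.mpr h)
  push_neg at hex
  obtain ⟨ℓ, hℓ⟩ := hex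
  obtain ⟨u0, hu0⟩ := hsurj ℓ
  have hu0A : u0 ∉ A := by
    intro h
    obtain ⟨s, hsS, hls⟩ := (Finset.mem_filter.mp h).2
    exact hℓ (Finset.mem_image.mpr ⟨s, hsS, by rw [← hls, hu0]⟩)
  have hfu0 : q ≤ f u0 := by
    have hge : 1 + c ≤ S.inf' hS (dist u0) := by
      apply Finset.le_inf' hS
      intro s hsS
      have hne : lab u0 ≠ lab s := by
        intro h
        exact hℓ (Finset.mem_image.mpr ⟨s, hsS, by rw [← h, hu0]⟩)
      exact (hinter u0 s hne).le
    exact Real.rpow_le_rpow (by linarith) hge hα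
  have hDge : N + q ≤ D := by
    have hsplit : D = N + ∑ u ∈ Finset.univ.filter (fun u => ¬∃ s ∈ S, lab u = lab s), f u := by
      rw [hD, hN, hA, ← Finset.sum_filter_add_sum_filter_not Finset.univ
        (fun u => ∃ s ∈ S, lab u = lab s) f]
    have hu0mem : u0 ∈ Finset.univ.filter (fun u => ¬∃ s ∈ S, lab u = lab s) := by
      simp only [Finset.mem_filter, Finset.mem_univ, true_and]
      intro ⟨s, hsS, hls⟩
      exact hℓ (Finset.mem_image.mpr ⟨s, hsS, by rw [← hls, hu0]⟩)
    have : q ≤ ∑ u ∈ Finset.univ.filter (fun u => ¬∃ s ∈ S, lab u = lab s), f u :=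
      hfu0.trans (Finset.single_le_sum (fun u _ => hf0 u) hu0mem)
    linarith [hsplit.ge]
  have hDpos : 0 < D := by linarith
  have htn : 0 < (t * n : ℝ) := by
    have h1 : (1 : ℝ) ≤ (t : ℝ) := by exact_mod_cast ht1
    have h2 : (1 : ℝ) ≤ (n : ℝ) := by exact_mod_cast hn
    nlinarith
  rw [div_le_div_iff₀ hDpos (by linarith)]
  have h := mul_le_mul_of_nonneg_left hDge (le_of_lt htn)
  nlinarith
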